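/- Let R be a Ricci-flat algebraic curvature tensor on a 4-dimensional real inner product space V, and let K_max (respectively K_min) denote the maximum (respectively minimum) of the sectional curvature of R over all 2-planes in V. Then −(1/2)·K_min ≤ K_max ≤ −2·K_min. -/

import Mathlib

open scoped RealInnerProductSpace

/-- For a Ricci-flat algebraic curvature tensor on a 4-dimensional real inner
product space, the extrema of sectional curvature satisfy
−(1/2)·Kmin ≤ Kmax ≤ −2·Kmin. -/
theorem ricci_flat_pinching
    {V : Type*} [NormedAddCommGroup V] [InnerProductSpace ℝ V]
    [FiniteDimensional ℝ V] (hdim : Module.finrank ℝ V = 4)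
    (R : V →ₗ[ℝ] V →ₗ[ℝ] V →ₗ[ℝ] V →ₗ[ℝ] ℝ)
    (hanti : ∀ x y z w : V, R x y z w = - R y x z w)
    (hpair : ∀ x y z w : V, R x y z w = R z w x y)
    (hbianchi : ∀ x y z w : V, R x y z w + R y z x w + R z x y w = 0)
    (hricciflat : ∀ (e : OrthonormalBasis (Fin 4) ℝ V) (x y : V),
      ∑ i, R x (e i) y (e i) = 0)
    (Kmax Kmin : ℝ)
    -- Kmax is the (attained) maximum of sectional curvature over all 2-planes
    (hmax_mem : ∃ u v : V, ⟪u, u⟫ = 1 ∧ ⟪v, v⟫ = 1 ∧ ⟪u, v⟫ = 0 ∧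
      R u v u v = Kmax)
    (hmax_ub : ∀ u v : V, ⟪u, u⟫ = 1 → ⟪v, v⟫ = 1 → ⟪u, v⟫ = 0 →
      R u v u v ≤ Kmax)
    -- Kmin is the (attained) minimum of sectional curvature over all 2-planes
    (hmin_mem : ∃ u v : V, ⟪u, u⟫ = 1 ∧ ⟪v, v⟫ = 1 ∧ ⟪u, v⟫ = 0 ∧
      R u v u v = Kmin)
    (hmin_lb : ∀ u v : V, ⟪u, u⟫ = 1 → ⟪v, v⟫ = 1 → ⟪u, v⟫ = 0 →
      Kmin ≤ R u v u v) :
    -(1/2) * Kmin ≤ Kmax ∧ Kmax ≤ -2 * Kmin := by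
  have key : ∀ u w : V, ⟪u, u⟫ = 1 → ⟪w, w⟫ = 1 → ⟪u, w⟫ = 0 →
      ∃ a b : V, ⟪a, a⟫ = 1 ∧ ⟪u, a⟫ = 0 ∧ ⟪b, b⟫ = 1 ∧ ⟪u, b⟫ = 0 ∧
        R u w u w + R u a u a + R u b u b = 0 := by
    intro u w hu hw huw
    have hwu : ⟪w, u⟫ = 0 := by rw [real_inner_comm]; exact huw
    set v : Fin 4 → V := ![u, w, 0, 0] with hv
    have hcard : Module.finrank ℝ V = Fintype.card (Fin 4) := by simpa using hdim
    have hs : Orthonormal ℝ (({0, 1} : Set (Fin 4)).restrict v) := by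
      rw [orthonormal_iff_ite]
      rintro ⟨i, hi⟩ ⟨j, hj⟩
      simp only [Set.mem_insert_iff, Set.mem_singleton_iff] at hi hj
      rcases hi with rfl | rfl <;> rcases hj with rfl | rfl <;>
        simp [v, Set.restrict, hu, hw, huw, hwu, Subtype.ext_iff,
          (by simpa using hu : ‖u‖ = 1 ∨ ‖u‖ = -1), (by simpa using hw : ‖w‖ = 1 ∨ ‖w‖ = -1)]
    obtain ⟨e, he⟩ := hs.exists_orthonormalBasis_extension_of_card_eq hcard
    have he0 : e 0 = u := he 0 (by simp)
    have he1 : e 1 = w := he 1 (by simp)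
    have horth := e.orthonormal
    rw [orthonormal_iff_ite] at horth
    refine ⟨e 2, e 3, ?_, ?_, ?_, ?_, ?_⟩
    · simpa using horth 2 2
    · rw [← he0]; simpa using horth 0 2
    · simpa using horth 3 3
    · rw [← he0]; simpa using horth 0 3
    · have hr := hricciflat e u u
      rw [Fin.sum_univ_four, he0, he1] at hr
      have h0 : R u u u u = 0 := by have := hanti u u u u; linarith
      linarith
  constructor
  · obtain ⟨u, w, hu, hw, huw, hR⟩ := hmin_mem
    obtain ⟨a, b, ha, hua, hb, hub, hsum⟩ := key u w hu hw huw
    have h1 := hmax_ub u a hu ha hua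
    have h2 := hmax_ub u b hu hb hub
    linarith
  · obtain ⟨u, w, hu, hw, huw, hR⟩ := hmax_mem
    obtain ⟨a, b, ha, hua, hb, hub, hsum⟩ := key u w hu hw huw
    have h1 := hmin_lb u a hu ha hua
    have h2 := hmin_lb u b hu hb hub
    linarith
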